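/- Let G be an unweighted digraph (self-loops allowed) that is strongly connected. Then G admits a 2-realization; moreover, for any vertex v of G there exists a 2-realization of G whose first element is v, and there exists a 2-realization of G whose last element is v. -/

import Mathlib

/-- The sequence digraph of `x` with window size `w` has an arc `(u,v)` exactly when
there are positions `k < k' < k + w` with `x_k = u` and `x_{k'} = v`. -/
def seqArc {V : Type*} (w : ℕ) (x : List V) (u v : V) : Prop :=
  ∃ k k' : ℕ, k < k' ∧ k' < k + w ∧ x[k]? = some u ∧ x[k']? = some v

/-- `x` is a `w`-realization of the digraph on vertex set `V` (self-loops allowed)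
with adjacency relation `Adj`. -/
def IsRealizationD {V : Type*} (w : ℕ) (Adj : V → V → Prop) (x : List V) : Prop :=
  x ≠ [] ∧ (∀ v : V, v ∈ x) ∧ ∀ u v : V, Adj u v ↔ seqArc w x u v

section Aux

variable {V : Type*} {Adj : V → V → Prop}

/-- `(u,v)` is a consecutive pair of `x`. -/
def Pr (x : List V) (u v : V) : Prop := ∃ k : ℕ, x[k]? = some u ∧ x[k+1]? = some v

/-- `x` is a walk from `a` to `b` in the digraph `Adj`. -/
def IsWalk (Adj : V → V → Prop) (x : List V) (a b : V) : Prop :=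
  x.head? = some a ∧ x.getLast? = some b ∧ x.Chain' Adj

lemma seqArc_two_iff_pr (x : List V) (u v : V) : seqArc 2 x u v ↔ Pr x u v := by
  constructor
  · rintro ⟨k, k', h1, h2, h3, h4⟩
    have : k' = k + 1 := by omega
    exact ⟨k, h3, this ▸ h4⟩
  · rintro ⟨k, h1, h2⟩
    exact ⟨k, k+1, by omega, by omega, h1, h2⟩

lemma pr_adj (hc : x.Chain' Adj) (h : Pr x u v) : Adj u v := by
  obtain ⟨k, h1, h2⟩ := h
  obtain ⟨hk1, e1⟩ := List.getElem?_eq_some_iff.1 h1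
  obtain ⟨hk2, e2⟩ := List.getElem?_eq_some_iff.1 h2
  have := List.isChain_iff_getElem.1 hc k (by omega)
  rwa [e1, e2] at this

lemma pr_append_left {x y : List V} {u v : V} (h : Pr x u v) : Pr (x ++ y) u v := by
  obtain ⟨k, h1, h2⟩ := h
  obtain ⟨hk2, _⟩ := List.getElem?_eq_some_iff.1 h2
  refine ⟨k, ?_, ?_⟩ <;> rw [List.getElem?_append] <;> simp [h1, h2, show k < x.length by omega, hk2,
    (List.getElem?_eq_some_iff.1 h1).choose_spec, (List.getElem?_eq_some_iff.1 h2).choose_spec]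

lemma walk_exists (a b : V) (h : Relation.ReflTransGen Adj a b) :
    ∃ x : List V, IsWalk Adj x a b := by
  induction h with
  | refl => exact ⟨[a], rfl, rfl, List.isChain_singleton a⟩
  | @tail b c hab hbc ih =>
    obtain ⟨x, hh, hl, hc⟩ := ih
    refine ⟨x ++ [c], ?_, List.getLast?_concat, ?_⟩
    · rw [List.head?_append, hh]; rfl
    · rw [List.Chain', List.isChain_append]
      refine ⟨hc, List.isChain_singleton c, ?_⟩
      intro p hp q hq
      simp only [List.head?_cons, Option.mem_def, Option.some.injEq] at hq
      rw [hl] at hp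
      simp only [Option.mem_def, Option.some.injEq] at hp
      rw [hp, hq] at hbc; exact hbc

lemma walk_join {x y : List V} {a b c : V} (hx : IsWalk Adj x a b) (hy : IsWalk Adj y b c) :
    ∃ z : List V, IsWalk Adj z a c ∧ (∀ v ∈ x, v ∈ z) ∧ (∀ v ∈ y, v ∈ z) ∧
      (∀ u v, Pr x u v → Pr z u v) ∧ (∀ u v, Pr y u v → Pr z u v) := by
  obtain ⟨hxh, hxl, hxc⟩ := hx
  obtain ⟨hyh, hyl, hyc⟩ := hy
  obtain ⟨t, rfl⟩ : ∃ t, y = b :: t := by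
    cases y with
    | nil => simp at hyh
    | cons p t =>
      refine ⟨t, ?_⟩
      simp only [List.head?_cons, Option.some.injEq] at hyh
      rw [hyh]
  have hxne : x ≠ [] := by rintro rfl; simp at hxh
  have hxlen : 1 ≤ x.length := List.length_pos_iff.2 hxne
  refine ⟨x ++ t, ⟨?_, ?_, ?_⟩, ?_, ?_, ?_, ?_⟩
  · rw [List.head?_append, hxh]; rfl
  · -- getLast? (x ++ t) = some c
    cases t with
    | nil =>
      simp only [List.append_nil]
      simp only [List.getLast?_singleton] at hyl
      rw [hxl]; rw [hyl]
    | cons q s =>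
      rw [List.getLast?_append_of_ne_nil x (by simp)]
      rwa [List.getLast?_cons_cons] at hyl
  · rw [List.Chain', List.isChain_append]
    refine ⟨hxc, (List.isChain_cons.1 hyc).2, ?_⟩
    intro p hp q hq
    rw [hxl] at hp
    simp only [Option.mem_def, Option.some.injEq] at hp
    subst hp
    exact (List.isChain_cons.1 hyc).1 q hq
  · intro v hv; exact List.mem_append_left _ hv
  · intro v hv
    rcases List.mem_cons.1 hv with rfl | hv
    · exact List.mem_append_left _ (List.mem_of_mem_getLast? (by simp [hxl]))
    · exact List.mem_append_right _ hv
  · intro u v h; exact pr_append_left h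
  · -- pairs of b :: t preserved
    intro u v h
    have key : ∀ k : ℕ, (x ++ t)[x.length - 1 + k]? = (b :: t)[k]?  := by
      intro k
      cases k with
      | zero =>
        rw [List.getElem?_append, if_pos (by omega)]
        simpa [← List.getLast?_eq_getElem?] using hxl
      | succ j =>
        rw [show x.length - 1 + (j+1) = x.length + j by omega,
          List.getElem?_append_right (by omega)]
        simp
    obtain ⟨k, h1, h2⟩ := h
    exact ⟨x.length - 1 + k, by rw [key k]; exact h1,
      by rw [show x.length - 1 + k + 1 = x.length - 1 + (k+1) by omega, key (k+1)]; exact h2⟩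

lemma walk_visit (hsc : ∀ u v : V, Relation.ReflTransGen Adj u v) (L : List V) (a : V) :
    ∃ x, IsWalk Adj x a a ∧ ∀ v ∈ L, v ∈ x := by
  induction L with
  | nil => exact ⟨[a], ⟨rfl, rfl, List.isChain_singleton a⟩, by simp⟩
  | cons w L ih =>
    obtain ⟨x, hx, hxm⟩ := ih
    obtain ⟨y, hy⟩ := walk_exists a w (hsc a w)
    obtain ⟨z, hz⟩ := walk_exists w a (hsc w a)
    obtain ⟨yz, hyz, hym, hzm, _, _⟩ := walk_join hy hz
    obtain ⟨r, hr, hyzm, hxm', _, _⟩ := walk_join hyz hx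
    refine ⟨r, hr, ?_⟩
    intro v hv
    rcases List.mem_cons.1 hv with rfl | hv
    · exact hyzm v (hym v (List.mem_of_mem_getLast? (by simp [hy.2.1])))
    · exact hxm' v (hxm v hv)

lemma walk_arcs (hsc : ∀ u v : V, Relation.ReflTransGen Adj u v) (L : List (V × V))
    (hL : ∀ p ∈ L, Adj p.1 p.2) (a : V) :
    ∃ x, IsWalk Adj x a a ∧ ∀ p ∈ L, Pr x p.1 p.2 := by
  induction L with
  | nil => exact ⟨[a], ⟨rfl, rfl, List.isChain_singleton a⟩, by simp⟩
  | cons p L ih =>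
    obtain ⟨x, hx, hxp⟩ := ih (fun q hq => hL q (List.mem_cons_of_mem _ hq))
    obtain ⟨y, hy⟩ := walk_exists a p.1 (hsc a p.1)
    have harc : Adj p.1 p.2 := hL p (List.mem_cons_self)
    have hw : IsWalk Adj [p.1, p.2] p.1 p.2 :=
      ⟨rfl, rfl, List.isChain_pair.2 harc⟩
    obtain ⟨yz, hyz, _, _, _, hprz⟩ := walk_join hy hw
    obtain ⟨w, hww⟩ := walk_exists p.2 a (hsc p.2 a)
    obtain ⟨r1, hr1, _, _, hpr1, _⟩ := walk_join hyz hww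
    obtain ⟨r, hr, _, _, hpr2, hpr3⟩ := walk_join hr1 hx
    refine ⟨r, hr, ?_⟩
    intro q hq
    rcases List.mem_cons.1 hq with rfl | hq
    · exact hpr2 _ _ (hpr1 _ _ (hprz q.1 q.2 ⟨0, rfl, rfl⟩))
    · exact hpr3 _ _ (hxp q hq)

end Aux

theorem stmt1 {V : Type*} [Fintype V] [Nonempty V] (Adj : V → V → Prop)
    (hsc : ∀ u v : V, Relation.ReflTransGen Adj u v) :
    (∃ x : List V, IsRealizationD 2 Adj x) ∧
    (∀ v : V, ∃ x : List V, IsRealizationD 2 Adj x ∧ x.head? = some v) ∧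
    (∀ v : V, ∃ x : List V, IsRealizationD 2 Adj x ∧ x.getLast? = some v) := by
  classical
  -- main lemma: for any a b, a realization which is a walk from a to b
  have main : ∀ a b : V, ∃ x : List V, IsRealizationD 2 Adj x ∧
      x.head? = some a ∧ x.getLast? = some b := by
    intro a b
    set L : List (V × V) := (Finset.univ.filter (fun p : V × V => Adj p.1 p.2)).toList with hLdef
    have hL : ∀ p ∈ L, Adj p.1 p.2 := by
      intro p hp
      simpa using (Finset.mem_filter.1 (Finset.mem_toList.1 hp)).2
    obtain ⟨x1, hx1, hx1m⟩ := walk_visit hsc Finset.univ.toList a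
    obtain ⟨x2, hx2, hx2p⟩ := walk_arcs hsc L hL a
    obtain ⟨x3, hx3⟩ := walk_exists a b (hsc a b)
    obtain ⟨y, hy, _, _, hyp2, _⟩ := walk_join hx2 hx3
    obtain ⟨z, hz, hzm1, _, _, hzp⟩ := walk_join hx1 hy
    obtain ⟨hzh, hzl, hzc⟩ := hz
    refine ⟨z, ⟨?_, ?_, ?_⟩, hzh, hzl⟩
    · rintro rfl; simp at hzh
    · intro v; exact hzm1 v (hx1m v (by simp))
    · intro u v
      rw [seqArc_two_iff_pr]
      constructor
      · intro h
        exact hzp u v (hyp2 u v (hx2p (u, v) (by simp [hLdef, h])))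
      · exact pr_adj hzc
  refine ⟨?_, ?_, ?_⟩
  · obtain ⟨a⟩ := ‹Nonempty V›
    obtain ⟨x, hx, _⟩ := main a a
    exact ⟨x, hx⟩
  · intro v
    obtain ⟨x, hx, h1, _⟩ := main v v
    exact ⟨x, hx, h1⟩
  · intro v
    obtain ⟨x, hx, _, h2⟩ := main v v
    exact ⟨x, hx, h2⟩
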